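/- Let Ā = (A_1,…,A_d) be a d-contraction on a Hilbert space H, M a closed invariant subspace with projection P, and let B̄ and C̄ be the restriction of Ā to M and the compression of Ā to M^⊥, respectively. Then for every p with 1 ≤ p ≤ ∞, the following are equivalent: (i) both defect operators Δ_B̄ and Δ_C̄ belong to 𝓛^p; (ii) Δ_Ā belongs to 𝓛^p and [P, A_k] ∈ 𝓛^{2p} for every k = 1,…,d. -/

import Mathlib

open scoped ENNReal ComplexInnerProductSpace

set_option linter.unusedSectionVars false

noncomputable section

set_option synthInstance.maxHeartbeats 400000
set_option maxHeartbeats 1000000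

namespace Arveson

/-- The `n`-th approximation number of a bounded operator between complex normed spaces:
the distance from `T` to the set of operators of rank at most `n`.  For operators between
Hilbert spaces this is precisely the `n`-th singular value of `T`. -/
noncomputable def approxNum {H K : Type*} [NormedAddCommGroup H] [NormedSpace ℂ H]
    [NormedAddCommGroup K] [NormedSpace ℂ K] (T : H →L[ℂ] K) (n : ℕ) : ℝ :=
  sInf {c : ℝ | ∃ F : H →L[ℂ] K, Module.rank ℂ (LinearMap.range (F : H →ₗ[ℂ] K)) ≤ n ∧ c = ‖T - F‖}

/-- Membership in the Schatten–von Neumann class `𝓛^p`: the singular value sequence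
(= the sequence of approximation numbers) is `p`-summable. -/
def MemSchatten {H K : Type*} [NormedAddCommGroup H] [NormedSpace ℂ H]
    [NormedAddCommGroup K] [NormedSpace ℂ K] (p : ℝ) (T : H →L[ℂ] K) : Prop :=
  Summable fun n => approxNum T n ^ p

/-- Membership in `𝓛^p` for an extended real exponent `p`, where `𝓛^∞` is interpreted as
the class of compact operators. -/
def MemSchattenE {H K : Type*} [NormedAddCommGroup H] [NormedSpace ℂ H]
    [NormedAddCommGroup K] [NormedSpace ℂ K] (p : ℝ≥0∞) (T : H →L[ℂ] K) : Prop :=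
  if p = ∞ then IsCompactOperator T else MemSchatten p.toReal T

/-- The orthogonal projection onto a closed subspace `M`, as an operator `H →L[ℂ] H`
(junk value `0` if `M` is not closed). -/
noncomputable def orthProjCLM {H : Type*} [NormedAddCommGroup H] [InnerProductSpace ℂ H]
    [CompleteSpace H] (M : Submodule ℂ H) : H →L[ℂ] H :=
  open scoped Classical in
  if h : IsClosed (M : Set H) then
    haveI : CompleteSpace M := h.completeSpace_coe
    M.subtypeL.comp (Submodule.orthogonalProjectionOnto M)
  else 0

universe u

section Rank

variable {H K L : Type u} [NormedAddCommGroup H] [NormedSpace ℂ H]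
  [NormedAddCommGroup K] [NormedSpace ℂ K] [NormedAddCommGroup L] [NormedSpace ℂ L]

/-- rank at most n -/
def RankLE (T : H →L[ℂ] K) (n : ℕ) : Prop := Module.rank ℂ (LinearMap.range (T : H →ₗ[ℂ] K)) ≤ n

lemma rankLE_zero (n : ℕ) : RankLE (0 : H →L[ℂ] K) n := by
  unfold RankLE
  have : LinearMap.range ((0 : H →L[ℂ] K) : H →ₗ[ℂ] K) = ⊥ := LinearMap.range_zero
  rw [this]
  simp

lemma rank_eq (T : H →L[ℂ] K) :
    Module.rank ℂ (LinearMap.range (T : H →ₗ[ℂ] K)) = LinearMap.rank (T : H →ₗ[ℂ] K) := by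
  rfl

lemma RankLE.add {T S : H →L[ℂ] K} {m n : ℕ} (hT : RankLE T m) (hS : RankLE S n) :
    RankLE (T + S) (m + n) := by
  unfold RankLE at *
  rw [rank_eq] at *
  push_cast
  calc LinearMap.rank ((T + S : H →L[ℂ] K) : H →ₗ[ℂ] K)
      = LinearMap.rank ((T : H →ₗ[ℂ] K) + (S : H →ₗ[ℂ] K)) := by norm_cast
    _ ≤ LinearMap.rank (T : H →ₗ[ℂ] K) + LinearMap.rank (S : H →ₗ[ℂ] K) :=
        LinearMap.rank_add_le _ _
    _ ≤ (m : Cardinal) + n := add_le_add hT hS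

lemma RankLE.comp_left {T : H →L[ℂ] K} {n : ℕ} (hT : RankLE T n) (S : K →L[ℂ] L) :
    RankLE (S ∘L T) n := by
  unfold RankLE at *
  rw [rank_eq] at *
  calc LinearMap.rank ((S ∘L T : H →L[ℂ] L) : H →ₗ[ℂ] L)
      = LinearMap.rank ((S : K →ₗ[ℂ] L) ∘ₗ (T : H →ₗ[ℂ] K)) := by norm_cast
    _ ≤ LinearMap.rank (T : H →ₗ[ℂ] K) := LinearMap.rank_comp_le_right _ _
    _ ≤ n := hT

lemma RankLE.comp_right {T : K →L[ℂ] L} {n : ℕ} (hT : RankLE T n) (S : H →L[ℂ] K) :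
    RankLE (T ∘L S) n := by
  unfold RankLE at *
  rw [rank_eq] at *
  calc LinearMap.rank ((T ∘L S : H →L[ℂ] L) : H →ₗ[ℂ] L)
      = LinearMap.rank ((T : K →ₗ[ℂ] L) ∘ₗ (S : H →ₗ[ℂ] K)) := by norm_cast
    _ ≤ LinearMap.rank (T : K →ₗ[ℂ] L) := LinearMap.rank_comp_le_left _ _
    _ ≤ n := hT

end Rank

section ApproxNum

variable {H K L : Type u} [NormedAddCommGroup H] [NormedSpace ℂ H]
  [NormedAddCommGroup K] [NormedSpace ℂ K] [NormedAddCommGroup L] [NormedSpace ℂ L]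

lemma approxSet_nonempty (T : H →L[ℂ] K) (n : ℕ) :
    Set.Nonempty {c : ℝ | ∃ F : H →L[ℂ] K, Module.rank ℂ (LinearMap.range (F : H →ₗ[ℂ] K)) ≤ n ∧ c = ‖T - F‖} :=
  ⟨‖T - 0‖, 0, rankLE_zero n, rfl⟩

lemma approxSet_bddBelow (T : H →L[ℂ] K) (n : ℕ) :
    BddBelow {c : ℝ | ∃ F : H →L[ℂ] K, Module.rank ℂ (LinearMap.range (F : H →ₗ[ℂ] K)) ≤ n ∧ c = ‖T - F‖} :=
  ⟨0, fun c hc => by obtain ⟨F, _, rfl⟩ := hc; positivity⟩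

lemma approxNum_le {T F : H →L[ℂ] K} {n : ℕ} (hF : RankLE F n) : approxNum T n ≤ ‖T - F‖ :=
  csInf_le (approxSet_bddBelow T n) ⟨F, hF, rfl⟩

lemma approxNum_nonneg (T : H →L[ℂ] K) (n : ℕ) : 0 ≤ approxNum T n :=
  le_csInf (approxSet_nonempty T n) (fun c hc => by obtain ⟨F, _, rfl⟩ := hc; positivity)

lemma approxNum_le_norm (T : H →L[ℂ] K) (n : ℕ) : approxNum T n ≤ ‖T‖ := by
  simpa using approxNum_le (T := T) (rankLE_zero n)

lemma approxNum_exists {T : H →L[ℂ] K} {n : ℕ} {c : ℝ} (h : approxNum T n < c) :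
    ∃ F : H →L[ℂ] K, RankLE F n ∧ ‖T - F‖ < c := by
  obtain ⟨x, hx, hxc⟩ := exists_lt_of_csInf_lt (approxSet_nonempty T n) h
  obtain ⟨F, hF, rfl⟩ := hx
  exact ⟨F, hF, hxc⟩

lemma approxNum_antitone (T : H →L[ℂ] K) : Antitone (approxNum T) := by
  intro m n hmn
  refine le_csInf (approxSet_nonempty T m) ?_
  rintro c ⟨F, hF, rfl⟩
  exact approxNum_le (le_trans hF (by exact_mod_cast Nat.cast_le.mpr hmn))

lemma approxNum_add (S T : H →L[ℂ] K) (m n : ℕ) :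
    approxNum (S + T) (m + n) ≤ approxNum S m + approxNum T n := by
  refine le_of_forall_pos_le_add fun ε hε => ?_
  obtain ⟨F, hF, hFn⟩ := approxNum_exists (T := S) (n := m)
    (lt_add_of_pos_right _ (half_pos hε))
  obtain ⟨G, hG, hGn⟩ := approxNum_exists (T := T) (n := n)
    (lt_add_of_pos_right _ (half_pos hε))
  have : approxNum (S + T) (m + n) ≤ ‖S + T - (F + G)‖ := approxNum_le (hF.add hG)
  have h2 : ‖S + T - (F + G)‖ ≤ ‖S - F‖ + ‖T - G‖ := by
    have : S + T - (F + G) = (S - F) + (T - G) := by abel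
    rw [this]; exact norm_add_le _ _
  linarith

lemma approxNum_comp_left (S : K →L[ℂ] L) (T : H →L[ℂ] K) (n : ℕ) :
    approxNum (S ∘L T) n ≤ ‖S‖ * approxNum T n := by
  refine le_of_forall_pos_le_add fun ε hε => ?_
  have hd : 0 < ε / (‖S‖ + 1) := by positivity
  obtain ⟨G, hG, hGn⟩ := approxNum_exists (T := T) (n := n) (lt_add_of_pos_right _ hd)
  have h1 : approxNum (S ∘L T) n ≤ ‖S ∘L T - S ∘L G‖ := approxNum_le (hG.comp_left S)
  have h2 : ‖S ∘L T - S ∘L G‖ ≤ ‖S‖ * ‖T - G‖ := by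
    have : S ∘L T - S ∘L G = S ∘L (T - G) := by ext x; simp
    rw [this]; exact ContinuousLinearMap.opNorm_comp_le _ _
  have h3 : ‖S‖ * ‖T - G‖ ≤ ‖S‖ * (approxNum T n + ε / (‖S‖ + 1)) :=
    mul_le_mul_of_nonneg_left hGn.le (norm_nonneg _)
  have h4 : ‖S‖ * (ε / (‖S‖ + 1)) ≤ ε := by
    rw [mul_div_assoc']
    rw [div_le_iff₀ (by positivity)]
    nlinarith [norm_nonneg S, hε.le]
  nlinarith [norm_nonneg S, approxNum_nonneg T n]

lemma approxNum_comp_right (S : K →L[ℂ] L) (T : H →L[ℂ] K) (n : ℕ) :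
    approxNum (S ∘L T) n ≤ approxNum S n * ‖T‖ := by
  refine le_of_forall_pos_le_add fun ε hε => ?_
  have hd : 0 < ε / (‖T‖ + 1) := by positivity
  obtain ⟨G, hG, hGn⟩ := approxNum_exists (T := S) (n := n) (lt_add_of_pos_right _ hd)
  have h1 : approxNum (S ∘L T) n ≤ ‖S ∘L T - G ∘L T‖ := approxNum_le (hG.comp_right T)
  have h2 : ‖S ∘L T - G ∘L T‖ ≤ ‖S - G‖ * ‖T‖ := by
    have : S ∘L T - G ∘L T = (S - G) ∘L T := by ext x; simp
    rw [this]; exact ContinuousLinearMap.opNorm_comp_le _ _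
  have h3 : ‖S - G‖ * ‖T‖ ≤ (approxNum S n + ε / (‖T‖ + 1)) * ‖T‖ :=
    mul_le_mul_of_nonneg_right hGn.le (norm_nonneg _)
  have h4 : (ε / (‖T‖ + 1)) * ‖T‖ ≤ ε := by
    rw [div_mul_eq_mul_div, div_le_iff₀ (by positivity)]
    nlinarith [norm_nonneg T, hε.le]
  nlinarith [norm_nonneg T, approxNum_nonneg S n]

lemma approxNum_comp_add (S : K →L[ℂ] L) (T : H →L[ℂ] K) (m n : ℕ) :
    approxNum (S ∘L T) (m + n) ≤ approxNum S m * approxNum T n := by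
  refine le_of_forall_pos_le_add fun ε hε => ?_
  set a := approxNum S m with ha
  set b := approxNum T n with hb
  have ha0 : 0 ≤ a := approxNum_nonneg S m
  have hb0 : 0 ≤ b := approxNum_nonneg T n
  set δ := min 1 (ε / (a + b + 1)) with hδdef
  have hδ : 0 < δ := lt_min one_pos (by positivity)
  obtain ⟨F, hF, hFn⟩ := approxNum_exists (T := S) (n := m) (lt_add_of_pos_right _ hδ)
  obtain ⟨G, hG, hGn⟩ := approxNum_exists (T := T) (n := n) (lt_add_of_pos_right _ hδ)
  have hrank : RankLE (F ∘L T + (S - F) ∘L G) (m + n) :=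
    (hF.comp_right T).add (hG.comp_left (S - F))
  have key : S ∘L T - (F ∘L T + (S - F) ∘L G) = (S - F) ∘L (T - G) := by
    ext x; simp [ContinuousLinearMap.comp_apply, map_sub]; abel
  have h1 : approxNum (S ∘L T) (m + n) ≤ ‖(S - F) ∘L (T - G)‖ := by
    rw [← key]; exact approxNum_le hrank
  have h2 : ‖(S - F) ∘L (T - G)‖ ≤ ‖S - F‖ * ‖T - G‖ := ContinuousLinearMap.opNorm_comp_le _ _
  have h3 : ‖S - F‖ * ‖T - G‖ ≤ (a + δ) * (b + δ) :=
    mul_le_mul hFn.le hGn.le (norm_nonneg _) (by linarith)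
  have hδ1 : δ ≤ 1 := min_le_left _ _
  have hδ2 : δ ≤ ε / (a + b + 1) := min_le_right _ _
  have h4 : (a + δ) * (b + δ) ≤ a * b + ε := by
    have h5 : (a + δ) * (b + δ) = a * b + δ * (a + b + δ) := by ring
    have h6 : δ * (a + b + δ) ≤ δ * (a + b + 1) := by nlinarith
    have h7 : δ * (a + b + 1) ≤ ε := by
      rw [← le_div_iff₀ (by positivity)]; exact hδ2
    linarith
  linarith

end ApproxNum


section Hilbert

variable {H K L : Type u}
  [NormedAddCommGroup H] [InnerProductSpace ℂ H] [CompleteSpace H]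
  [NormedAddCommGroup K] [InnerProductSpace ℂ K] [CompleteSpace K]
  [NormedAddCommGroup L] [InnerProductSpace ℂ L] [CompleteSpace L]

open ContinuousLinearMap in
/-- rank bound from range inside a finite-dimensional submodule -/
lemma rankLE_of_range_le {T : H →L[ℂ] K} {W : Submodule ℂ K} [FiniteDimensional ℂ W]
    {n : ℕ} (h : ∀ x, T x ∈ W) (hW : Module.finrank ℂ W ≤ n) : RankLE T n := by
  unfold RankLE
  have h1 : LinearMap.range (T : H →ₗ[ℂ] K) ≤ W := by
    rintro y ⟨x, rfl⟩; exact h x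
  calc Module.rank ℂ (LinearMap.range (T : H →ₗ[ℂ] K)) ≤ Module.rank ℂ W := Submodule.rank_mono h1
    _ = (Module.finrank ℂ W : Cardinal) := (Module.finrank_eq_rank ℂ W).symm
    _ ≤ n := by exact_mod_cast hW

open ContinuousLinearMap in
lemma RankLE.adjoint {F : H →L[ℂ] K} {n : ℕ} (hF : RankLE F n) :
    RankLE (ContinuousLinearMap.adjoint F) n := by
  unfold RankLE at hF
  set V : Submodule ℂ K := LinearMap.range (F : H →ₗ[ℂ] K) with hV
  haveI hfin : FiniteDimensional ℂ V :=
    Module.rank_lt_aleph0_iff.mp (lt_of_le_of_lt hF (Cardinal.nat_lt_aleph0 n))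
  have hVn : Module.finrank ℂ V ≤ n := Module.finrank_le_of_rank_le hF
  -- adjoint F = (adjoint F ∘L V.subtypeL) ∘L orthogonalProjection V
  have key : ContinuousLinearMap.adjoint F
      = (ContinuousLinearMap.adjoint F ∘L V.subtypeL) ∘L Submodule.orthogonalProjectionOnto V := by
    ext x
    have hx : x - (Submodule.orthogonalProjectionOnto V x : K) ∈ Vᗮ :=
      Submodule.sub_starProjection_mem_orthogonal (K := V) x
    have hzero : ContinuousLinearMap.adjoint F (x - (Submodule.orthogonalProjectionOnto V x : K)) = 0 := by
      have : ∀ z : H, ⟪ContinuousLinearMap.adjoint F (x - (Submodule.orthogonalProjectionOnto V x : K)), z⟫ = 0 := by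
        intro z
        rw [ContinuousLinearMap.adjoint_inner_left]
        have hFz : F z ∈ V := ⟨z, rfl⟩
        have := (Submodule.mem_orthogonal V _).mp hx (F z) hFz
        rw [← inner_conj_symm, this, map_zero]
      have := this (ContinuousLinearMap.adjoint F (x - (Submodule.orthogonalProjectionOnto V x : K)))
      exact inner_self_eq_zero.mp this
    have h4 : ContinuousLinearMap.adjoint F x
        - ContinuousLinearMap.adjoint F (Submodule.orthogonalProjectionOnto V x : K) = 0 := by
      rw [← map_sub]; exact hzero
    have h2 := sub_eq_zero.mp h4
    simpa [ContinuousLinearMap.comp_apply] using h2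
  rw [RankLE, key]
  -- now bound rank through orthogonalProjection V
  have h3 : RankLE ((Submodule.orthogonalProjectionOnto V : K →L[ℂ] V)) n := by
    apply rankLE_of_range_le (W := (⊤ : Submodule ℂ V)) (fun x => trivial)
    simpa using hVn
  -- compose
  unfold RankLE at h3
  calc Module.rank ℂ (LinearMap.range (((ContinuousLinearMap.adjoint F ∘L V.subtypeL) ∘L (Submodule.orthogonalProjectionOnto V : K →L[ℂ] V)) : K →ₗ[ℂ] H))
      = LinearMap.rank (((ContinuousLinearMap.adjoint F ∘L V.subtypeL) : V →ₗ[ℂ] H) ∘ₗ ((Submodule.orthogonalProjectionOnto V : K →L[ℂ] V) : K →ₗ[ℂ] V)) := by norm_cast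
    _ ≤ LinearMap.rank (((Submodule.orthogonalProjectionOnto V : K →L[ℂ] V)) : K →ₗ[ℂ] V) := LinearMap.rank_comp_le_right _ _
    _ ≤ n := h3

end Hilbert

section Hilbert2

variable {H K L : Type u}
  [NormedAddCommGroup H] [InnerProductSpace ℂ H] [CompleteSpace H]
  [NormedAddCommGroup K] [InnerProductSpace ℂ K] [CompleteSpace K]
  [NormedAddCommGroup L] [InnerProductSpace ℂ L] [CompleteSpace L]

open ContinuousLinearMap

lemma approxNum_adjoint_le (T : H →L[ℂ] K) (n : ℕ) :
    approxNum (ContinuousLinearMap.adjoint T) n ≤ approxNum T n := by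
  refine le_of_forall_pos_le_add fun ε hε => ?_
  obtain ⟨F, hF, hFn⟩ := approxNum_exists (T := T) (n := n) (lt_add_of_pos_right _ hε)
  have h1 : approxNum (ContinuousLinearMap.adjoint T) n
      ≤ ‖ContinuousLinearMap.adjoint T - ContinuousLinearMap.adjoint F‖ :=
    approxNum_le hF.adjoint
  have h2 : ‖ContinuousLinearMap.adjoint T - ContinuousLinearMap.adjoint F‖ = ‖T - F‖ := by
    calc ‖ContinuousLinearMap.adjoint T - ContinuousLinearMap.adjoint F‖
        = ‖ContinuousLinearMap.adjoint (T - F)‖ := by rw [map_sub]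
      _ = ‖T - F‖ := by
          exact LinearIsometryEquiv.norm_map (ContinuousLinearMap.adjoint (𝕜 := ℂ) (E := H) (F := K)) _
  linarith

/-- Cauchy–Schwarz for the semi-inner product of a positive operator. -/
lemma isPositive_re_inner_sq_le {T : H →L[ℂ] H} (hT : T.IsPositive) (x y : H) :
    ((⟪T x, y⟫ : ℂ).re) ^ 2 ≤ T.reApplyInnerSelf x * T.reApplyInnerSelf y := by
  have hadj : ContinuousLinearMap.adjoint T = T :=
    ContinuousLinearMap.isSelfAdjoint_iff'.mp hT.isSelfAdjoint
  have hsym : ((⟪T y, x⟫ : ℂ).re) = ((⟪T x, y⟫ : ℂ).re) := by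
    have h1 : (⟪T y, x⟫ : ℂ) = ⟪y, T x⟫ := by
      conv_lhs => rw [← hadj]
      exact ContinuousLinearMap.adjoint_inner_left T x y
    rw [h1]
    have h2 := inner_re_symm (𝕜 := ℂ) (T x) y
    simpa [RCLike.re_to_complex] using h2.symm
  have hre : ∀ u : H, T.reApplyInnerSelf u = ((⟪T u, u⟫ : ℂ).re) := by
    intro u; rw [ContinuousLinearMap.reApplyInnerSelf_apply]; simp [RCLike.re_to_complex]
  have key : ∀ t : ℝ, 0 ≤ T.reApplyInnerSelf y * (t * t)
      + (2 * ((⟪T x, y⟫ : ℂ).re)) * t + T.reApplyInnerSelf x := by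
    intro t
    have h0 : (0:ℝ) ≤ T.reApplyInnerSelf (x + (t : ℂ) • y) := hT.2 _
    have hexp : T.reApplyInnerSelf (x + (t : ℂ) • y)
        = T.reApplyInnerSelf y * (t * t)
          + (2 * ((⟪T x, y⟫ : ℂ).re)) * t + T.reApplyInnerSelf x := by
      rw [hre, hre, hre]
      rw [map_add, ContinuousLinearMap.map_smul]
      simp only [inner_add_left, inner_add_right, inner_smul_left, inner_smul_right,
        Complex.conj_ofReal, Complex.add_re, Complex.mul_re, Complex.ofReal_re,
        Complex.ofReal_im, smul_eq_mul]
      rw [show ((⟪T y, x⟫ : ℂ).re) = ((⟪T x, y⟫ : ℂ).re) from hsym]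
      ring
    linarith [hexp ▸ h0]
  have hdisc := discrim_le_zero key
  rw [discrim] at hdisc
  nlinarith [hdisc]

lemma isPositive_norm_apply_sq_le {T : H →L[ℂ] H} (hT : T.IsPositive) (x : H) :
    ‖T x‖ ^ 2 ≤ ‖T‖ * T.reApplyInnerSelf x := by
  by_cases hTx : T x = 0
  · simp only [hTx, norm_zero]
    have := mul_nonneg (norm_nonneg T) (hT.2 x)
    nlinarith
  · have h1 := isPositive_re_inner_sq_le hT x (T x)
    have h2 : ((⟪T x, T x⟫ : ℂ).re) = ‖T x‖ ^ 2 := by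
      have := inner_self_eq_norm_sq (𝕜 := ℂ) (T x)
      simpa [RCLike.re_to_complex] using this
    rw [h2] at h1
    have h3 : T.reApplyInnerSelf (T x) ≤ ‖T (T x)‖ * ‖T x‖ := by
      rw [ContinuousLinearMap.reApplyInnerSelf_apply]
      exact re_inner_le_norm _ _
    have h4 : ‖T (T x)‖ ≤ ‖T‖ * ‖T x‖ := T.le_opNorm _
    have h5 : (0:ℝ) < ‖T x‖ := norm_pos_iff.mpr hTx
    have h6 : (0:ℝ) ≤ T.reApplyInnerSelf x := hT.2 x
    have h7 : T.reApplyInnerSelf (T x) ≤ ‖T‖ * ‖T x‖ ^ 2 := by nlinarith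
    have h8 : (‖T x‖ ^ 2) ^ 2 ≤ T.reApplyInnerSelf x * (‖T‖ * ‖T x‖ ^ 2) :=
      le_trans h1 (mul_le_mul_of_nonneg_left h7 h6)
    nlinarith [mul_pos h5 h5]

lemma isPositive_norm_le_of_form {T : H →L[ℂ] H} (hT : T.IsPositive) {c : ℝ} (hc : 0 ≤ c)
    (h : ∀ x, T.reApplyInnerSelf x ≤ c * ‖x‖ ^ 2) : ‖T‖ ≤ c := by
  by_cases hT0 : ‖T‖ = 0
  · rw [hT0]; exact hc
  · have hTpos : (0:ℝ) < ‖T‖ := lt_of_le_of_ne (norm_nonneg _) (Ne.symm hT0)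
    have hb : ∀ x, ‖T x‖ ≤ Real.sqrt (‖T‖ * c) * ‖x‖ := by
      intro x
      have h1 := isPositive_norm_apply_sq_le hT x
      have h2 := h x
      have h3 : ‖T x‖ ^ 2 ≤ (‖T‖ * c) * ‖x‖ ^ 2 := by nlinarith [hT.2 x]
      have h4 : ‖T x‖ ^ 2 ≤ (Real.sqrt (‖T‖ * c) * ‖x‖) ^ 2 := by
        rw [mul_pow, Real.sq_sqrt (by positivity)]
        exact h3
      have h5 : (0:ℝ) ≤ Real.sqrt (‖T‖ * c) * ‖x‖ := by positivity
      nlinarith [norm_nonneg (T x)]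
    have h6 : ‖T‖ ≤ Real.sqrt (‖T‖ * c) := T.opNorm_le_bound (by positivity) hb
    have h7 : ‖T‖ ^ 2 ≤ ‖T‖ * c := by
      have := Real.sq_sqrt (show (0:ℝ) ≤ ‖T‖ * c by positivity)
      nlinarith
    nlinarith

end Hilbert2

section Hilbert3

variable {H K L : Type u}
  [NormedAddCommGroup H] [InnerProductSpace ℂ H] [CompleteSpace H]
  [NormedAddCommGroup K] [InnerProductSpace ℂ K] [CompleteSpace K]
  [NormedAddCommGroup L] [InnerProductSpace ℂ L] [CompleteSpace L]

open ContinuousLinearMap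

private lemma le_of_sq_le_sq {a b : ℝ} (hb : 0 ≤ b) (h : a ^ 2 ≤ b ^ 2) : a ≤ b := by
  nlinarith [sq_nonneg (a - b), sq_nonneg (a + b)]

/-- The orthogonal projection onto a finite-dimensional subspace, as endomorphism. -/
noncomputable def finProj (W : Submodule ℂ H) [FiniteDimensional ℂ W] : H →L[ℂ] H :=
  haveI : CompleteSpace W := FiniteDimensional.complete ℂ W
  W.subtypeL ∘L Submodule.orthogonalProjectionOnto W

lemma finProj_rankLE (W : Submodule ℂ H) [FiniteDimensional ℂ W] {n : ℕ}
    (hW : Module.finrank ℂ W ≤ n) : RankLE (finProj W) n := by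
  haveI : CompleteSpace W := FiniteDimensional.complete ℂ W
  exact rankLE_of_range_le (W := W) (fun x => by simp [finProj]) hW

lemma finProj_mem_orthogonal (W : Submodule ℂ H) [FiniteDimensional ℂ W] (x : H) :
    x - finProj W x ∈ Wᗮ := by
  haveI : CompleteSpace W := FiniteDimensional.complete ℂ W
  exact Submodule.sub_starProjection_mem_orthogonal (K := W) x

lemma finProj_sub_norm_le (W : Submodule ℂ H) [FiniteDimensional ℂ W] (x : H) :
    ‖x - finProj W x‖ ≤ ‖x‖ := by
  haveI : CompleteSpace W := FiniteDimensional.complete ℂ W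
  have h := Submodule.norm_sq_eq_add_norm_sq_projection x W
  have heq : x - finProj W x = (Submodule.orthogonalProjectionOnto Wᗮ x : H) := by
    have h2 : (Submodule.orthogonalProjectionOnto W x : H) + (Submodule.orthogonalProjectionOnto Wᗮ x : H) = x :=
      Submodule.starProjection_add_starProjection_orthogonal x
    have : finProj W x = (Submodule.orthogonalProjectionOnto W x : H) := rfl
    rw [this]
    linear_combination (norm := module) h2.symm
  rw [heq]
  refine le_of_sq_le_sq (norm_nonneg _) ?_
  have h' : ‖x‖ ^ 2 = ‖(Submodule.orthogonalProjectionOnto W x : H)‖ ^ 2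
      + ‖((Submodule.orthogonalProjectionOnto Wᗮ) x : H)‖ ^ 2 := by
    simpa using h
  nlinarith [sq_nonneg ‖(Submodule.orthogonalProjectionOnto W x : H)‖]

lemma adjoint_one_sub_finProj (W : Submodule ℂ H) [FiniteDimensional ℂ W] :
    ContinuousLinearMap.adjoint (1 - finProj W) = 1 - finProj W := by
  haveI : CompleteSpace W := FiniteDimensional.complete ℂ W
  rw [map_sub]
  congr 1
  · exact ContinuousLinearMap.adjoint_id
  · rw [finProj, ContinuousLinearMap.adjoint_comp,
      Submodule.adjoint_subtypeL, Submodule.adjoint_orthogonalProjectionOnto]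

/-- Upper bound for approximation numbers from a norm bound on a finite-codimension subspace. -/
lemma approxNum_le_of_norm_bound (T : H →L[ℂ] K) (W : Submodule ℂ H) [FiniteDimensional ℂ W]
    {n : ℕ} (hW : Module.finrank ℂ W ≤ n) {c : ℝ} (hc : 0 ≤ c)
    (h : ∀ x ∈ Wᗮ, ‖T x‖ ≤ c * ‖x‖) : approxNum T n ≤ c := by
  have hrank : RankLE (T ∘L finProj W) n := (finProj_rankLE W hW).comp_left T
  have hle : approxNum T n ≤ ‖T - T ∘L finProj W‖ := approxNum_le hrank
  have hbound : ‖T - T ∘L finProj W‖ ≤ c := by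
    refine opNorm_le_bound _ hc fun x => ?_
    have h1 : (T - T ∘L finProj W) x = T (x - finProj W x) := by
      simp [map_sub]
    rw [h1]
    calc ‖T (x - finProj W x)‖ ≤ c * ‖x - finProj W x‖ :=
          h _ (finProj_mem_orthogonal W x)
      _ ≤ c * ‖x‖ := mul_le_mul_of_nonneg_left (finProj_sub_norm_le W x) hc
  linarith

/-- Upper bound for approximation numbers of a positive operator from a quadratic-form bound. -/
lemma approxNum_le_of_form_bound {T : H →L[ℂ] H} (hT : T.IsPositive)
    (W : Submodule ℂ H) [FiniteDimensional ℂ W]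
    {n : ℕ} (hW : Module.finrank ℂ W ≤ n) {c : ℝ} (hc : 0 ≤ c)
    (h : ∀ x ∈ Wᗮ, T.reApplyInnerSelf x ≤ c * ‖x‖ ^ 2) : approxNum T (2 * n) ≤ c := by
  set R := finProj W with hR
  have hRrank : RankLE R n := finProj_rankLE W hW
  have hsR : ContinuousLinearMap.adjoint (1 - R) = 1 - R := adjoint_one_sub_finProj W
  have hrank : RankLE (R ∘L T + (1 - R) ∘L (T ∘L R)) (n + n) :=
    (hRrank.comp_right T).add ((hRrank.comp_left T).comp_left (1 - R))
  have hkey : T - (R ∘L T + (1 - R) ∘L (T ∘L R)) = (1 - R) ∘L T ∘L (1 - R) := by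
    have : ∀ X Y : H →L[ℂ] H, X ∘L Y = X * Y := fun _ _ => rfl
    simp only [this]
    noncomm_ring
  have hle : approxNum T (2 * n) ≤ ‖(1 - R) ∘L T ∘L (1 - R)‖ := by
    rw [two_mul, ← hkey]
    exact approxNum_le hrank
  have hpos : ((1 - R) ∘L T ∘L (1 - R)).IsPositive := by
    have := hT.conj_adjoint (1 - R)
    rwa [hsR] at this
  have hbound : ‖(1 - R) ∘L T ∘L (1 - R)‖ ≤ c := by
    refine isPositive_norm_le_of_form hpos hc fun x => ?_
    have h1 : ((1 - R) ∘L T ∘L (1 - R)).reApplyInnerSelf x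
        = T.reApplyInnerSelf ((1 - R) x) := by
      rw [ContinuousLinearMap.reApplyInnerSelf_apply,
        ContinuousLinearMap.reApplyInnerSelf_apply]
      have h2 : ((1 - R) ∘L T ∘L (1 - R)) x
          = (ContinuousLinearMap.adjoint (1 - R)) (T ((1 - R) x)) := by
        rw [hsR]; rfl
      rw [h2, ContinuousLinearMap.adjoint_inner_left]
    rw [h1]
    have h3 : (1 - R) x ∈ Wᗮ := by
      have : (1 - R) x = x - finProj W x := rfl
      rw [this]; exact finProj_mem_orthogonal W x
    calc T.reApplyInnerSelf ((1 - R) x) ≤ c * ‖(1 - R) x‖ ^ 2 := h _ h3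
      _ ≤ c * ‖x‖ ^ 2 := by
          have h4 : ‖(1 - R) x‖ ≤ ‖x‖ := finProj_sub_norm_le W x
          have h5 : (0:ℝ) ≤ ‖(1 - R) x‖ := norm_nonneg _
          have h6 : ‖(1 - R) x‖ ^ 2 ≤ ‖x‖ ^ 2 := by nlinarith
          exact mul_le_mul_of_nonneg_left h6 hc
  linarith

/-- Lower bound: a finite-rank approximant yields a quadratic-form bound on a
finite-codimension subspace. -/
lemma exists_form_bound (T : H →L[ℂ] H) {F : H →L[ℂ] H} {n : ℕ} (hF : RankLE F n) :
    ∃ W : Submodule ℂ H, ∃ _ : FiniteDimensional ℂ W, Module.finrank ℂ W ≤ n ∧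
      ∀ x ∈ Wᗮ, T.reApplyInnerSelf x ≤ ‖T - F‖ * ‖x‖ ^ 2 := by
  set V : Submodule ℂ H := LinearMap.range (F : H →ₗ[ℂ] H) with hV
  haveI hfin : FiniteDimensional ℂ V :=
    Module.rank_lt_aleph0_iff.mp (lt_of_le_of_lt hF (Cardinal.nat_lt_aleph0 n))
  refine ⟨V, hfin, Module.finrank_le_of_rank_le hF, fun x hx => ?_⟩
  have h1 : (⟪F x, x⟫ : ℂ) = 0 :=
    (Submodule.mem_orthogonal V x).mp hx (F x) ⟨x, rfl⟩
  have h2 : T.reApplyInnerSelf x = ((⟪(T - F) x, x⟫ : ℂ).re) := by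
    rw [ContinuousLinearMap.reApplyInnerSelf_apply]
    have h3 : (T - F) x = T x - F x := rfl
    rw [h3, inner_sub_left, h1, sub_zero]
    simp [RCLike.re_to_complex]
  rw [h2]
  calc ((⟪(T - F) x, x⟫ : ℂ).re) ≤ ‖(T - F) x‖ * ‖x‖ := by
        have := re_inner_le_norm (𝕜 := ℂ) ((T - F) x) x
        simpa only [RCLike.re_to_complex] using this
    _ ≤ (‖T - F‖ * ‖x‖) * ‖x‖ :=
        mul_le_mul_of_nonneg_right ((T - F).le_opNorm x) (norm_nonneg _)
    _ = ‖T - F‖ * ‖x‖ ^ 2 := by ring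

/-- Monotonicity of approximation numbers under operator domination. -/
lemma approxNum_dominated {X Y : H →L[ℂ] H} (hX : X.IsPositive) (hYX : (Y - X).IsPositive)
    (n : ℕ) : approxNum X (2 * n) ≤ approxNum Y n := by
  refine le_of_forall_pos_le_add fun ε hε => ?_
  obtain ⟨F, hF, hFn⟩ := approxNum_exists (T := Y) (n := n) (lt_add_of_pos_right _ hε)
  obtain ⟨W, hfin, hWn, hform⟩ := exists_form_bound Y hF
  haveI := hfin
  have hc : (0:ℝ) ≤ approxNum Y n + ε := by
    have := approxNum_nonneg Y n; linarith
  refine approxNum_le_of_form_bound hX W hWn hc fun x hx => ?_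
  have h1 : X.reApplyInnerSelf x ≤ Y.reApplyInnerSelf x := by
    have h2 := hYX.2 x
    have h3 : (Y - X).reApplyInnerSelf x = Y.reApplyInnerSelf x - X.reApplyInnerSelf x := by
      simp only [ContinuousLinearMap.reApplyInnerSelf_apply]
      have : (Y - X) x = Y x - X x := rfl
      rw [this, inner_sub_left, map_sub]
    linarith
  calc X.reApplyInnerSelf x ≤ Y.reApplyInnerSelf x := h1
    _ ≤ ‖Y - F‖ * ‖x‖ ^ 2 := hform x hx
    _ ≤ (approxNum Y n + ε) * ‖x‖ ^ 2 := by nlinarith [sq_nonneg ‖x‖, norm_nonneg x]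

/-- The square of an approximation number of the adjoint is bounded by the corresponding
approximation number of `T T†`. -/
lemma approxNum_adjoint_sq_le (T : H →L[ℂ] K) (n : ℕ) :
    approxNum (ContinuousLinearMap.adjoint T) n ^ 2
      ≤ approxNum (T ∘L ContinuousLinearMap.adjoint T) n := by
  have key : ∀ ε > (0:ℝ), approxNum (ContinuousLinearMap.adjoint T) n ^ 2
      ≤ approxNum (T ∘L ContinuousLinearMap.adjoint T) n + ε := by
    intro ε hε
    set c := approxNum (T ∘L ContinuousLinearMap.adjoint T) n + ε with hcdef
    have hc0 : (0:ℝ) ≤ c := by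
      have := approxNum_nonneg (T ∘L ContinuousLinearMap.adjoint T) n; positivity
    obtain ⟨F, hF, hFn⟩ := approxNum_exists (T := T ∘L ContinuousLinearMap.adjoint T) (n := n)
      (lt_add_of_pos_right _ hε)
    obtain ⟨W, hfin, hWn, hform⟩ := exists_form_bound (T ∘L ContinuousLinearMap.adjoint T) hF
    haveI := hfin
    have hbound : ∀ x ∈ Wᗮ, ‖ContinuousLinearMap.adjoint T x‖ ≤ Real.sqrt c * ‖x‖ := by
      intro x hx
      have h1 : (T ∘L ContinuousLinearMap.adjoint T).reApplyInnerSelf x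
          = ‖ContinuousLinearMap.adjoint T x‖ ^ 2 := by
        rw [ContinuousLinearMap.reApplyInnerSelf_apply]
        have h2 : (T ∘L ContinuousLinearMap.adjoint T) x
            = (ContinuousLinearMap.adjoint (ContinuousLinearMap.adjoint T))
                (ContinuousLinearMap.adjoint T x) := by
          rw [ContinuousLinearMap.adjoint_adjoint]; rfl
        rw [h2, ContinuousLinearMap.adjoint_inner_left]
        exact inner_self_eq_norm_sq _
      have h3 := hform x hx
      rw [h1] at h3
      have h4 : ‖T ∘L ContinuousLinearMap.adjoint T - F‖ ≤ c := le_of_lt hFn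
      have h5 : ‖ContinuousLinearMap.adjoint T x‖ ^ 2 ≤ c * ‖x‖ ^ 2 := by
        nlinarith [sq_nonneg ‖x‖]
      have h6 : ‖ContinuousLinearMap.adjoint T x‖ ^ 2 ≤ (Real.sqrt c * ‖x‖) ^ 2 := by
        rw [mul_pow, Real.sq_sqrt hc0]; exact h5
      exact le_of_sq_le_sq (by positivity) h6
    have h7 : approxNum (ContinuousLinearMap.adjoint T) n ≤ Real.sqrt c :=
      approxNum_le_of_norm_bound _ W hWn (Real.sqrt_nonneg c) hbound
    calc approxNum (ContinuousLinearMap.adjoint T) n ^ 2 ≤ Real.sqrt c ^ 2 := by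
          have := approxNum_nonneg (ContinuousLinearMap.adjoint T) n
          nlinarith
      _ = c := Real.sq_sqrt hc0
  by_contra hcon
  push_neg at hcon
  have := key ((approxNum (ContinuousLinearMap.adjoint T) n ^ 2
    - approxNum (T ∘L ContinuousLinearMap.adjoint T) n) / 2) (by linarith)
  linarith

end Hilbert3

section Summability

lemma summable_half {g : ℕ → ℝ} (hg0 : ∀ n, 0 ≤ g n) (hg : Summable g) :
    Summable fun m => g (m / 2) := by
  refine summable_of_sum_range_le (c := 2 * ∑' n, g n) (fun n => hg0 _) fun N => ?_
  have key : ∀ N, ∑ m ∈ Finset.range (2 * N), g (m / 2) = 2 * ∑ n ∈ Finset.range N, g n := by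
    intro N
    induction N with
    | zero => simp
    | succ N ih =>
      have h2 : 2 * (N + 1) = 2 * N + 1 + 1 := by ring
      rw [h2, Finset.sum_range_succ, Finset.sum_range_succ, ih, Finset.sum_range_succ]
      have e1 : (2 * N) / 2 = N := by omega
      have e2 : (2 * N + 1) / 2 = N := by omega
      rw [e1, e2]; ring
  calc ∑ m ∈ Finset.range N, g (m / 2) ≤ ∑ m ∈ Finset.range (2 * N), g (m / 2) := by
        apply Finset.sum_le_sum_of_subset_of_nonneg
        · exact Finset.range_subset_range.mpr (by omega)
        · intros; exact hg0 _
    _ = 2 * ∑ n ∈ Finset.range N, g n := key N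
    _ ≤ 2 * ∑' n, g n := by
        have h3 := Summable.sum_le_tsum (Finset.range N) (fun i _ => hg0 i) hg
        linarith

private lemma rpow_add_le_two_rpow {x y q : ℝ} (hx : 0 ≤ x) (hy : 0 ≤ y) (hq : 0 ≤ q) :
    (x + y) ^ q ≤ 2 ^ q * (x ^ q + y ^ q) := by
  have h2q : (0:ℝ) ≤ 2 ^ q := Real.rpow_nonneg (by norm_num) q
  rcases le_total x y with h | h
  · have h2 : (x + y) ^ q ≤ (2 * y) ^ q :=
      Real.rpow_le_rpow (by linarith) (by linarith) hq
    have h3 : (2 * y) ^ q = 2 ^ q * y ^ q := Real.mul_rpow (by norm_num) hy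
    have h4 : y ^ q ≤ x ^ q + y ^ q := le_add_of_nonneg_left (Real.rpow_nonneg hx q)
    calc (x + y) ^ q ≤ 2 ^ q * y ^ q := by rw [← h3]; exact h2
      _ ≤ 2 ^ q * (x ^ q + y ^ q) := mul_le_mul_of_nonneg_left h4 h2q
  · have h2 : (x + y) ^ q ≤ (2 * x) ^ q :=
      Real.rpow_le_rpow (by linarith) (by linarith) hq
    have h3 : (2 * x) ^ q = 2 ^ q * x ^ q := Real.mul_rpow (by norm_num) hx
    have h4 : x ^ q ≤ x ^ q + y ^ q := le_add_of_nonneg_right (Real.rpow_nonneg hy q)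
    calc (x + y) ^ q ≤ 2 ^ q * x ^ q := by rw [← h3]; exact h2
      _ ≤ 2 ^ q * (x ^ q + y ^ q) := mul_le_mul_of_nonneg_left h4 h2q

end Summability

section SchattenBasic

variable {H K L H₂ K₂ : Type u}
  [NormedAddCommGroup H] [InnerProductSpace ℂ H]
  [NormedAddCommGroup K] [InnerProductSpace ℂ K]
  [NormedAddCommGroup L] [InnerProductSpace ℂ L]
  [NormedAddCommGroup H₂] [InnerProductSpace ℂ H₂]
  [NormedAddCommGroup K₂] [InnerProductSpace ℂ K₂]
  {q : ℝ}

lemma memSchatten_zero (hq : 0 < q) : MemSchatten q (0 : H →L[ℂ] K) := by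
  have h : ∀ n, approxNum (0 : H →L[ℂ] K) n = 0 := fun n =>
    le_antisymm (by simpa using approxNum_le_norm (0 : H →L[ℂ] K) n) (approxNum_nonneg _ _)
  unfold MemSchatten
  simp only [h, Real.zero_rpow (ne_of_gt hq)]
  exact summable_zero

lemma memSchatten_of_le (hq : 0 < q) {C : ℝ} (hC : 0 ≤ C)
    {T : H →L[ℂ] K} {S : H₂ →L[ℂ] K₂}
    (h : ∀ n, approxNum S n ≤ C * approxNum T (n / 2))
    (hT : MemSchatten q T) : MemSchatten q S := by
  unfold MemSchatten at *
  have hsum : Summable fun n => C ^ q * approxNum T (n / 2) ^ q :=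
    (summable_half (fun n => Real.rpow_nonneg (approxNum_nonneg T n) q) hT).mul_left _
  refine Summable.of_nonneg_of_le (fun n => Real.rpow_nonneg (approxNum_nonneg S n) q)
    (fun n => ?_) hsum
  calc approxNum S n ^ q ≤ (C * approxNum T (n / 2)) ^ q :=
        Real.rpow_le_rpow (approxNum_nonneg S n) (h n) hq.le
    _ = C ^ q * approxNum T (n / 2) ^ q := Real.mul_rpow hC (approxNum_nonneg T _)

lemma MemSchatten.comp_left (hq : 0 < q) {T : H →L[ℂ] K} (hT : MemSchatten q T)
    (S : K →L[ℂ] L) : MemSchatten q (S ∘L T) := by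
  refine memSchatten_of_le hq (norm_nonneg S) (fun n => ?_) hT
  calc approxNum (S ∘L T) n ≤ ‖S‖ * approxNum T n := approxNum_comp_left S T n
    _ ≤ ‖S‖ * approxNum T (n / 2) :=
        mul_le_mul_of_nonneg_left (approxNum_antitone T (Nat.div_le_self n 2)) (norm_nonneg S)

lemma MemSchatten.comp_right (hq : 0 < q) {T : H →L[ℂ] K} (hT : MemSchatten q T)
    (S : L →L[ℂ] H) : MemSchatten q (T ∘L S) := by
  refine memSchatten_of_le hq (norm_nonneg S) (fun n => ?_) hT
  calc approxNum (T ∘L S) n ≤ approxNum T n * ‖S‖ := approxNum_comp_right T S n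
    _ = ‖S‖ * approxNum T n := by ring
    _ ≤ ‖S‖ * approxNum T (n / 2) :=
        mul_le_mul_of_nonneg_left (approxNum_antitone T (Nat.div_le_self n 2)) (norm_nonneg S)

lemma MemSchatten.add (hq : 0 < q) {S T : H →L[ℂ] K} (hS : MemSchatten q S)
    (hT : MemSchatten q T) : MemSchatten q (S + T) := by
  unfold MemSchatten at *
  have hsum : Summable fun n =>
      2 ^ q * (approxNum S (n / 2) ^ q + approxNum T (n / 2) ^ q) :=
    (((summable_half (fun n => Real.rpow_nonneg (approxNum_nonneg S n) q) hS).add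
      (summable_half (fun n => Real.rpow_nonneg (approxNum_nonneg T n) q) hT)).mul_left _)
  refine Summable.of_nonneg_of_le (fun n => Real.rpow_nonneg (approxNum_nonneg _ n) q)
    (fun n => ?_) hsum
  have h1 : approxNum (S + T) n ≤ approxNum S (n / 2) + approxNum T (n / 2) := by
    calc approxNum (S + T) n ≤ approxNum (S + T) (n / 2 + n / 2) :=
          approxNum_antitone _ (by omega)
      _ ≤ approxNum S (n / 2) + approxNum T (n / 2) := approxNum_add S T _ _
  calc approxNum (S + T) n ^ q ≤ (approxNum S (n / 2) + approxNum T (n / 2)) ^ q :=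
        Real.rpow_le_rpow (approxNum_nonneg _ n) h1 hq.le
    _ ≤ 2 ^ q * (approxNum S (n / 2) ^ q + approxNum T (n / 2) ^ q) :=
        rpow_add_le_two_rpow (approxNum_nonneg S _) (approxNum_nonneg T _) hq.le

end SchattenBasic

section SchattenHilbert

variable {H K : Type u}
  [NormedAddCommGroup H] [InnerProductSpace ℂ H] [CompleteSpace H]
  [NormedAddCommGroup K] [InnerProductSpace ℂ K] [CompleteSpace K]
  {q : ℝ}

lemma MemSchatten.dominated (hq : 0 < q) {X Y : H →L[ℂ] H} (hX : X.IsPositive)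
    (hYX : (Y - X).IsPositive) (hY : MemSchatten q Y) : MemSchatten q X := by
  refine memSchatten_of_le hq (zero_le_one) (fun n => ?_) hY
  rw [one_mul]
  calc approxNum X n ≤ approxNum X (2 * (n / 2)) := approxNum_antitone _ (by omega)
    _ ≤ approxNum Y (n / 2) := approxNum_dominated hX hYX _

lemma MemSchatten.adjoint (hq : 0 < q) {T : H →L[ℂ] K} (hT : MemSchatten q T) :
    MemSchatten q (ContinuousLinearMap.adjoint T) := by
  unfold MemSchatten at *
  refine Summable.of_nonneg_of_le (fun n => Real.rpow_nonneg (approxNum_nonneg _ n) q)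
    (fun n => ?_) hT
  exact Real.rpow_le_rpow (approxNum_nonneg _ n) (approxNum_adjoint_le T n) hq.le

private lemma sq_rpow_eq {a q : ℝ} (ha : 0 ≤ a) : (a ^ 2) ^ q = a ^ (2 * q) := by
  rw [← Real.rpow_natCast a 2, ← Real.rpow_mul ha]
  norm_num

lemma memSchatten_mul_star_iff (hq : 0 < q) (T : H →L[ℂ] K) :
    MemSchatten (2 * q) T ↔ MemSchatten q (T ∘L ContinuousLinearMap.adjoint T) := by
  constructor
  · intro hT
    unfold MemSchatten at *
    have hsum : Summable fun n => approxNum T (n / 2) ^ (2 * q) :=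
      summable_half (fun n => Real.rpow_nonneg (approxNum_nonneg T n) _) hT
    refine Summable.of_nonneg_of_le (fun n => Real.rpow_nonneg (approxNum_nonneg _ n) q)
      (fun n => ?_) hsum
    have h1 : approxNum (T ∘L ContinuousLinearMap.adjoint T) n
        ≤ approxNum T (n / 2) ^ 2 := by
      calc approxNum (T ∘L ContinuousLinearMap.adjoint T) n
          ≤ approxNum (T ∘L ContinuousLinearMap.adjoint T) (n / 2 + n / 2) :=
            approxNum_antitone _ (by omega)
        _ ≤ approxNum T (n / 2) * approxNum (ContinuousLinearMap.adjoint T) (n / 2) :=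
            approxNum_comp_add T (ContinuousLinearMap.adjoint T) _ _
        _ ≤ approxNum T (n / 2) * approxNum T (n / 2) :=
            mul_le_mul_of_nonneg_left (approxNum_adjoint_le T _) (approxNum_nonneg T _)
        _ = approxNum T (n / 2) ^ 2 := (sq _).symm
    calc approxNum (T ∘L ContinuousLinearMap.adjoint T) n ^ q
        ≤ (approxNum T (n / 2) ^ 2) ^ q :=
          Real.rpow_le_rpow (approxNum_nonneg _ n) h1 hq.le
      _ = approxNum T (n / 2) ^ (2 * q) := sq_rpow_eq (approxNum_nonneg T _)
  · intro hTT
    unfold MemSchatten at *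
    refine Summable.of_nonneg_of_le (fun n => Real.rpow_nonneg (approxNum_nonneg T n) _)
      (fun n => ?_) hTT
    have h1 : approxNum T n ^ 2 ≤ approxNum (T ∘L ContinuousLinearMap.adjoint T) n := by
      have h2 : approxNum T n ≤ approxNum (ContinuousLinearMap.adjoint T) n := by
        have := approxNum_adjoint_le (ContinuousLinearMap.adjoint T) n
        rwa [ContinuousLinearMap.adjoint_adjoint] at this
      have h3 := approxNum_adjoint_sq_le T n
      nlinarith [approxNum_nonneg T n, approxNum_nonneg (ContinuousLinearMap.adjoint T) n]
    calc approxNum T n ^ (2 * q) = (approxNum T n ^ 2) ^ q :=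
          (sq_rpow_eq (approxNum_nonneg T n)).symm
      _ ≤ approxNum (T ∘L ContinuousLinearMap.adjoint T) n ^ q :=
          Real.rpow_le_rpow (by positivity) h1 hq.le

end SchattenHilbert

section Compact

variable {H K L : Type u}
  [NormedAddCommGroup H] [InnerProductSpace ℂ H] [CompleteSpace H]
  [NormedAddCommGroup K] [InnerProductSpace ℂ K] [CompleteSpace K]
  [NormedAddCommGroup L] [InnerProductSpace ℂ L] [CompleteSpace L]

open Metric

private lemma lt_of_sq_lt_sq {a b : ℝ} (ha : 0 ≤ a) (hb : 0 ≤ b) (h : a ^ 2 < b ^ 2) :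
    a < b := by nlinarith

lemma isCompactOperator_of_sq_bound (f : H →L[ℂ] K) (g : H →L[ℂ] L) {C : ℝ}
    (h : ∀ w : H, ‖f w‖ ^ 2 ≤ C * (‖g w‖ * ‖w‖)) (hg : IsCompactOperator g) :
    IsCompactOperator f := by
  set C₀ : ℝ := |C| + 1 with hC₀def
  have hC₀pos : (0:ℝ) < C₀ := by positivity
  have h' : ∀ w : H, ‖f w‖ ^ 2 ≤ C₀ * (‖g w‖ * ‖w‖) := by
    intro w
    refine (h w).trans (mul_le_mul_of_nonneg_right ?_ (by positivity))
    have := le_abs_self C; linarith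
  have hgcl : IsCompact (closure ((g : H →ₗ[ℂ] L) '' Metric.ball 0 1)) :=
    IsCompactOperator.isCompact_closure_image_ball (f := (g : H →ₗ[ℂ] L)) hg 1
  have hgtb : TotallyBounded ((g : H →ₗ[ℂ] L) '' Metric.ball 0 1) :=
    hgcl.totallyBounded.subset subset_closure
  have hftb : TotallyBounded (⇑f '' Metric.ball 0 1) := by
    rw [Metric.totallyBounded_iff]
    intro ε hε
    set δ : ℝ := ε ^ 2 / (8 * C₀) with hδdef
    have hδpos : (0:ℝ) < δ := by positivity
    obtain ⟨t, htfin, htcover⟩ := Metric.totallyBounded_iff.mp hgtb δ hδpos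
    classical
    set Q : L → Prop := fun y => ∃ x : H, x ∈ Metric.ball (0:H) 1 ∧ g x ∈ Metric.ball y δ
      with hQdef
    set u : L → H := fun y => if hy : Q y then hy.choose else 0 with hudef
    refine ⟨(fun y => f (u y)) '' t, htfin.image _, ?_⟩
    rintro z ⟨x, hx, rfl⟩
    have hgx : g x ∈ ⋃ y ∈ t, Metric.ball y δ := htcover ⟨x, hx, rfl⟩
    rw [Set.mem_iUnion₂] at hgx
    obtain ⟨y, hyt, hgxy⟩ := hgx
    have hQy : Q y := ⟨x, hx, hgxy⟩
    have huy : u y ∈ Metric.ball (0:H) 1 ∧ g (u y) ∈ Metric.ball y δ := by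
      rw [hudef]; simp only [dif_pos hQy]; exact hQy.choose_spec
    rw [Set.mem_iUnion₂]
    refine ⟨f (u y), Set.mem_image_of_mem _ hyt, ?_⟩
    rw [Metric.mem_ball, dist_eq_norm]
    have h1 : ‖f x - f (u y)‖ ^ 2 = ‖f (x - u y)‖ ^ 2 := by rw [map_sub]
    have h2 : ‖g (x - u y)‖ ≤ 2 * δ := by
      have h3 : g (x - u y) = (g x - y) - (g (u y) - y) := by
        rw [map_sub]; abel
      rw [h3]
      have h4 : ‖g x - y‖ < δ := by
        have := hgxy; rwa [Metric.mem_ball, dist_eq_norm] at this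
      have h5 : ‖g (u y) - y‖ < δ := by
        have := huy.2; rwa [Metric.mem_ball, dist_eq_norm] at this
      calc ‖(g x - y) - (g (u y) - y)‖ ≤ ‖g x - y‖ + ‖g (u y) - y‖ := norm_sub_le _ _
        _ ≤ 2 * δ := by linarith
    have h6 : ‖x - u y‖ ≤ 2 := by
      have hx1 : ‖x‖ < 1 := by rwa [Metric.mem_ball, dist_zero_right] at hx
      have hu1 : ‖u y‖ < 1 := by
        have := huy.1; rwa [Metric.mem_ball, dist_zero_right] at this
      calc ‖x - u y‖ ≤ ‖x‖ + ‖u y‖ := norm_sub_le _ _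
        _ ≤ 2 := by linarith
    have h7 : ‖f x - f (u y)‖ ^ 2 ≤ C₀ * (2 * δ * 2) := by
      rw [h1]
      refine (h' _).trans (mul_le_mul_of_nonneg_left ?_ hC₀pos.le)
      have := norm_nonneg (g (x - u y))
      have := norm_nonneg (x - u y)
      nlinarith
    have h8 : C₀ * (2 * δ * 2) = ε ^ 2 / 2 := by
      rw [hδdef]; field_simp; ring
    refine lt_of_sq_lt_sq (norm_nonneg _) hε.le ?_
    rw [h8] at h7
    nlinarith
  have : IsCompact (closure (⇑f '' Metric.ball 0 1)) :=
    TotallyBounded.isCompact_of_isClosed hftb.closure isClosed_closure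
  exact (isCompactOperator_iff_isCompact_closure_image_ball (f : H →ₗ[ℂ] K) one_pos).mpr this

lemma isCompactOperator_dominated {X Y : H →L[ℂ] H} (hX : X.IsPositive)
    (hYX : (Y - X).IsPositive) (hY : IsCompactOperator Y) : IsCompactOperator X := by
  refine isCompactOperator_of_sq_bound X Y (C := ‖X‖) (fun w => ?_) hY
  have h1 := isPositive_norm_apply_sq_le hX w
  have h2 : X.reApplyInnerSelf w ≤ Y.reApplyInnerSelf w := by
    have h3 := hYX.2 w
    have h4 : (Y - X).reApplyInnerSelf w = Y.reApplyInnerSelf w - X.reApplyInnerSelf w := by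
      simp only [ContinuousLinearMap.reApplyInnerSelf_apply]
      have : (Y - X) w = Y w - X w := rfl
      rw [this, inner_sub_left, map_sub]
    linarith
  have h5 : Y.reApplyInnerSelf w ≤ ‖Y w‖ * ‖w‖ := by
    rw [ContinuousLinearMap.reApplyInnerSelf_apply]
    exact re_inner_le_norm _ _
  have h6 : (0:ℝ) ≤ ‖X‖ := norm_nonneg X
  nlinarith

lemma norm_adjoint_apply_sq (T : H →L[ℂ] K) (w : K) :
    ‖ContinuousLinearMap.adjoint T w‖ ^ 2
      ≤ ‖(T ∘L ContinuousLinearMap.adjoint T) w‖ * ‖w‖ := by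
  have h1 : ((⟪(T ∘L ContinuousLinearMap.adjoint T) w, w⟫ : ℂ).re)
      = ‖ContinuousLinearMap.adjoint T w‖ ^ 2 := by
    have h2 : (T ∘L ContinuousLinearMap.adjoint T) w
        = (ContinuousLinearMap.adjoint (ContinuousLinearMap.adjoint T))
            (ContinuousLinearMap.adjoint T w) := by
      rw [ContinuousLinearMap.adjoint_adjoint]; rfl
    rw [h2, ContinuousLinearMap.adjoint_inner_left]
    have := inner_self_eq_norm_sq (𝕜 := ℂ) (ContinuousLinearMap.adjoint T w)
    simpa [RCLike.re_to_complex] using this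
  rw [← h1]
  have := re_inner_le_norm (𝕜 := ℂ) ((T ∘L ContinuousLinearMap.adjoint T) w) w
  simpa [RCLike.re_to_complex] using this

lemma isCompactOperator_mul_star_iff (T : H →L[ℂ] K) :
    IsCompactOperator T ↔ IsCompactOperator (T ∘L ContinuousLinearMap.adjoint T) := by
  constructor
  · intro hT
    have := hT.comp_clm (ContinuousLinearMap.adjoint T)
    rwa [← ContinuousLinearMap.coe_comp'] at this
  · intro hTT
    have step1 : IsCompactOperator (ContinuousLinearMap.adjoint T) := by
      refine isCompactOperator_of_sq_bound (ContinuousLinearMap.adjoint T)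
        (T ∘L ContinuousLinearMap.adjoint T) (C := 1) (fun w => ?_) hTT
      rw [one_mul]
      exact norm_adjoint_apply_sq T w
    have step2 : IsCompactOperator (ContinuousLinearMap.adjoint T ∘L T) := by
      have := step1.comp_clm T
      rwa [← ContinuousLinearMap.coe_comp'] at this
    refine isCompactOperator_of_sq_bound T (ContinuousLinearMap.adjoint T ∘L T) (C := 1)
      (fun w => ?_) step2
    rw [one_mul]
    have := norm_adjoint_apply_sq (ContinuousLinearMap.adjoint T) w
    rwa [ContinuousLinearMap.adjoint_adjoint] at this

end Compact

section SchattenE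

variable {H K L : Type u}
  [NormedAddCommGroup H] [InnerProductSpace ℂ H] [CompleteSpace H]
  [NormedAddCommGroup K] [InnerProductSpace ℂ K] [CompleteSpace K]
  [NormedAddCommGroup L] [InnerProductSpace ℂ L] [CompleteSpace L]
  {p : ℝ≥0∞}

lemma toReal_pos_of_one_le (hp : 1 ≤ p) (hptop : p ≠ ∞) : 0 < p.toReal :=
  ENNReal.toReal_pos (lt_of_lt_of_le zero_lt_one hp).ne' hptop

lemma MemSchattenE.zero (hp : 1 ≤ p) : MemSchattenE p (0 : H →L[ℂ] K) := by
  unfold MemSchattenE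
  split_ifs with h
  · exact isCompactOperator_zero
  · exact memSchatten_zero (toReal_pos_of_one_le hp h)

lemma MemSchattenE.comp_left (hp : 1 ≤ p) {T : H →L[ℂ] K} (hT : MemSchattenE p T)
    (S : K →L[ℂ] L) : MemSchattenE p (S ∘L T) := by
  unfold MemSchattenE at *
  split_ifs with h
  · rw [h, if_pos rfl] at hT
    have := hT.continuous_comp S.continuous
    rwa [← ContinuousLinearMap.coe_comp'] at this
  · rw [if_neg h] at hT
    exact hT.comp_left (toReal_pos_of_one_le hp h) S

lemma MemSchattenE.comp_right (hp : 1 ≤ p) {T : H →L[ℂ] K} (hT : MemSchattenE p T)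
    (S : L →L[ℂ] H) : MemSchattenE p (T ∘L S) := by
  unfold MemSchattenE at *
  split_ifs with h
  · rw [h, if_pos rfl] at hT
    have := hT.comp_clm S
    rwa [← ContinuousLinearMap.coe_comp'] at this
  · rw [if_neg h] at hT
    exact hT.comp_right (toReal_pos_of_one_le hp h) S

lemma MemSchattenE.add (hp : 1 ≤ p) {S T : H →L[ℂ] K} (hS : MemSchattenE p S)
    (hT : MemSchattenE p T) : MemSchattenE p (S + T) := by
  unfold MemSchattenE at *
  split_ifs with h
  · rw [h, if_pos rfl] at hS hT
    have := hS.add hT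
    have hco : ⇑(S + T) = ⇑S + ⇑T := by ext x; simp
    rwa [hco]
  · rw [if_neg h] at hS hT
    exact hS.add (toReal_pos_of_one_le hp h) hT

lemma MemSchattenE.sum (hp : 1 ≤ p) {ι : Type*} (s : Finset ι) (f : ι → (H →L[ℂ] K))
    (hf : ∀ i ∈ s, MemSchattenE p (f i)) : MemSchattenE p (∑ i ∈ s, f i) := by
  classical
  induction s using Finset.induction_on with
  | empty => simpa using MemSchattenE.zero (H := H) (K := K) hp
  | insert _ _ hnotmem ih =>
    rename_i a s'
    rw [Finset.sum_insert hnotmem]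
    exact MemSchattenE.add hp (hf a (Finset.mem_insert_self a s'))
      (ih fun i hi => hf i (Finset.mem_insert_of_mem hi))

lemma MemSchattenE.dominated (hp : 1 ≤ p) {X Y : H →L[ℂ] H} (hX : X.IsPositive)
    (hYX : (Y - X).IsPositive) (hY : MemSchattenE p Y) : MemSchattenE p X := by
  unfold MemSchattenE at *
  split_ifs with h
  · rw [h, if_pos rfl] at hY
    exact isCompactOperator_dominated hX hYX hY
  · rw [if_neg h] at hY
    exact hY.dominated (toReal_pos_of_one_le hp h) hX hYX

lemma MemSchattenE.adjoint (hp : 1 ≤ p) {T : H →L[ℂ] K} (hT : MemSchattenE p T) :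
    MemSchattenE p (ContinuousLinearMap.adjoint T) := by
  unfold MemSchattenE at *
  split_ifs with h
  · rw [h, if_pos rfl] at hT
    refine (isCompactOperator_mul_star_iff (ContinuousLinearMap.adjoint T)).mpr ?_
    rw [ContinuousLinearMap.adjoint_adjoint]
    have := hT.continuous_comp (ContinuousLinearMap.adjoint T).continuous
    rwa [← ContinuousLinearMap.coe_comp'] at this
  · rw [if_neg h] at hT
    exact hT.adjoint (toReal_pos_of_one_le hp h)

lemma two_mul_eq_top_iff : (2 * p = ∞) ↔ p = ∞ := by
  rw [ENNReal.mul_eq_top]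
  simp

lemma memSchattenE_mul_star_iff (hp : 1 ≤ p) (T : H →L[ℂ] K) :
    MemSchattenE (2 * p) T ↔ MemSchattenE p (T ∘L ContinuousLinearMap.adjoint T) := by
  unfold MemSchattenE
  by_cases h : p = ∞
  · rw [if_pos (two_mul_eq_top_iff.mpr h), if_pos h]
    exact isCompactOperator_mul_star_iff T
  · rw [if_neg (fun hc => h (two_mul_eq_top_iff.mp hc)), if_neg h]
    have htr : (2 * p).toReal = 2 * p.toReal := by
      rw [ENNReal.toReal_mul]; norm_num
    rw [htr]
    exact memSchatten_mul_star_iff (toReal_pos_of_one_le hp h) T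

end SchattenE

section Blocks

/-- Key per-summand identity for the defect of the restriction. -/
lemma defect_block {R : Type*} [Ring R] [StarRing R] {P a : R}
    (hP2 : P * P = P) (hs : star P = P) (hPa : P * a * P = a * P) :
    P * a * P * (P * star a * P)
      = P * (a * star a) * P - (P * a - a * P) * star (P * a - a * P) := by
  have hsa : P * (star a * P) = P * star a := by
    have h := congrArg star hPa
    simpa [star_mul, hs, mul_assoc] using h
  have hstarD : star (P * a - a * P) = star a * P - P * star a := by
    simp [star_sub, star_mul, hs]
  rw [hstarD]
  have lhs_eq : P * a * P * (P * star a * P) = a * (P * star a) := by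
    calc P * a * P * (P * star a * P) = (P * a * P) * (P * (star a * P)) := by noncomm_ring
      _ = (a * P) * (P * star a) := by rw [hPa, hsa]
      _ = a * ((P * P) * star a) := by noncomm_ring
      _ = a * (P * star a) := by rw [hP2]
  rw [lhs_eq]
  have h1 : P * (a * star a) * P - (P * a - a * P) * (star a * P - P * star a)
      = P * a * P * star a + (a * P) * (star a * P) - a * (P * P) * star a := by noncomm_ring
  rw [h1, hPa, hP2]
  have h2 : (a * P) * (star a * P) = a * (P * (star a * P)) := by noncomm_ring
  rw [h2, hsa]
  noncomm_ring

/-- Key per-summand identity for the defect of the compression. -/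
lemma defect_blockC {R : Type*} [Ring R] [StarRing R] {P a : R}
    (hs : star P = P) (hPa : P * a * P = a * P) :
    ((1 - P) * a * (1 - P)) * ((1 - P) * star a * (1 - P))
      = (1 - P) * (a * star a) * (1 - P) := by
  have hPuP : P * star a * P = P * star a := by
    have h := congrArg star hPa
    simpa [star_mul, hs, mul_assoc] using h
  have hQa : (1 - P) * a * (1 - P) = (1 - P) * a := by
    have e : (1 - P) * a * (1 - P) - (1 - P) * a = P * a * P - a * P := by noncomm_ring
    have e2 : (1 - P) * a * (1 - P) - (1 - P) * a = 0 := by rw [e, hPa, sub_self]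
    exact sub_eq_zero.mp e2
  have hQu : (1 - P) * star a * (1 - P) = star a * (1 - P) := by
    have e : (1 - P) * star a * (1 - P) - star a * (1 - P)
        = P * star a * P - P * star a := by noncomm_ring
    have e2 : (1 - P) * star a * (1 - P) - star a * (1 - P) = 0 := by
      rw [e, hPuP, sub_self]
    exact sub_eq_zero.mp e2
  rw [hQa, hQu]
  noncomm_ring

lemma sandwich_dom {R : Type*} [Ring R] (P E : R) :
    ((P * E * P + (1 - P) * E * (1 - P)) + (P * E * P + (1 - P) * E * (1 - P))) - E
      = (P - (1 - P)) * E * (P - (1 - P)) := by noncomm_ring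

end Blocks

/-- Let `Ā` be a `d`-contraction, `M` a closed invariant subspace,
`B̄` the restriction of `Ā` to `M` and `C̄` the compression of `Ā` to `M⊥`.  Then for
every `1 ≤ p ≤ ∞` the following are equivalent: (i) both defect operators `Δ_B̄` and
`Δ_C̄` belong to `𝓛^p`; (ii) `Δ_Ā ∈ 𝓛^p` and `[P_M, A_k] ∈ 𝓛^{2p}` for all `k`. -/
theorem statement15 {H : Type*} [NormedAddCommGroup H] [InnerProductSpace ℂ H]
    [CompleteSpace H] (d : ℕ) (A : Fin d → (H →L[ℂ] H))
    (hcomm : ∀ i j, A i * A j = A j * A i)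
    (hcontr : ((1 : H →L[ℂ] H) - ∑ k, A k * star (A k)).IsPositive)
    (M : Submodule ℂ H) [CompleteSpace M] (hMcl : IsClosed (M : Set H))
    (hInv : ∀ k, ∀ x ∈ M, A k x ∈ M)
    (B : Fin d → (↥M →L[ℂ] ↥M))
    (hB : B = fun k => ((A k) ∘L M.subtypeL).codRestrict M (fun x => hInv k x x.2))
    (C : Fin d → (↥Mᗮ →L[ℂ] ↥Mᗮ))
    (hC : C = fun k => Submodule.orthogonalProjectionOnto Mᗮ ∘L ((A k) ∘L (Mᗮ).subtypeL))
    (p : ℝ≥0∞) (hp : 1 ≤ p) :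
    (MemSchattenE p ((1 : ↥M →L[ℂ] ↥M) - ∑ k, B k * star (B k)) ∧
        MemSchattenE p ((1 : ↥Mᗮ →L[ℂ] ↥Mᗮ) - ∑ k, C k * star (C k))) ↔
      (MemSchattenE p ((1 : H →L[ℂ] H) - ∑ k, A k * star (A k)) ∧
        ∀ k, MemSchattenE (2 * p) (orthProjCLM M * A k - A k * orthProjCLM M)) := by
  classical
  haveI : CompleteSpace ↥Mᗮ := (Submodule.isClosed_orthogonal M).completeSpace_coe
  set J : ↥M →L[ℂ] H := M.subtypeL with hJ
  set q1 : H →L[ℂ] ↥M := Submodule.orthogonalProjectionOnto M with hq1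
  set J2 : ↥Mᗮ →L[ℂ] H := (Mᗮ).subtypeL with hJ2
  set q2 : H →L[ℂ] ↥Mᗮ := Submodule.orthogonalProjectionOnto Mᗮ with hq2
  set P : H →L[ℂ] H := J ∘L q1 with hPdef
  set Q : H →L[ℂ] H := J2 ∘L q2 with hQdef
  set E : H →L[ℂ] H := 1 - ∑ k, A k * star (A k) with hEdef
  set D : Fin d → (H →L[ℂ] H) := fun k => P * A k - A k * P with hDdef
  -- basic facts
  have hMP : orthProjCLM M = P := by
    unfold orthProjCLM
    rw [dif_pos hMcl]
  have hq1J : ∀ x : ↥M, q1 (J x) = x := fun x => by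
    simp [hq1, hJ]
  have hq2J : ∀ x : ↥Mᗮ, q2 (J2 x) = x := fun x => by
    simp [hq2, hJ2]
  have hcoe1 : ∀ y : H, y ∈ M → ((q1 y : ↥M) : H) = y := by
    intro y hy
    have := hq1J ⟨y, hy⟩
    have h2 : J (⟨y, hy⟩ : ↥M) = y := rfl
    rw [h2] at this
    rw [this]
  have hPmem : ∀ y : H, y ∈ M → P y = y := by
    intro y hy
    have : P y = ((q1 y : ↥M) : H) := rfl
    rw [this, hcoe1 y hy]
  have hPQ1 : P + Q = 1 := by
    ext x
    have := Submodule.starProjection_add_starProjection_orthogonal (K := M) x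
    simpa [hPdef, hQdef, hq1, hq2, hJ, hJ2] using this
  have hQ1P : Q = 1 - P := by rw [← hPQ1]; abel
  have hPstar : star P = P := by
    rw [ContinuousLinearMap.star_eq_adjoint, hPdef, ContinuousLinearMap.adjoint_comp, hq1, hJ,
      Submodule.adjoint_subtypeL, Submodule.adjoint_orthogonalProjectionOnto]
  have hPP : P * P = P := by
    ext x
    have hmem : P x ∈ M := by
      have : P x = ((q1 x : ↥M) : H) := rfl
      rw [this]; exact SetLike.coe_mem _
    exact hPmem _ hmem
  have hPA : ∀ k, P * A k * P = A k * P := by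
    intro k
    ext x
    have hmem : P x ∈ M := by
      have : P x = ((q1 x : ↥M) : H) := rfl
      rw [this]; exact SetLike.coe_mem _
    have h1 : (P * A k * P) x = P (A k (P x)) := rfl
    have h2 : (A k * P) x = A k (P x) := rfl
    rw [h1, h2]
    exact hPmem _ (hInv k _ hmem)
  -- description of B and C
  have hB' : ∀ k, B k = q1 ∘L (A k ∘L J) := by
    intro k
    rw [hB]
    ext x
    have h2 : (((q1 ∘L (A k ∘L J)) x : ↥M) : H) = ((q1 (A k (J x)) : ↥M) : H) := rfl
    rw [h2, hcoe1 (A k (J x)) (hInv k (J x) x.2)]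
    rfl
  have hC' : ∀ k, C k = q2 ∘L (A k ∘L J2) := fun k => by rw [hC]
  have hstarB : ∀ k, star (B k) = q1 ∘L (star (A k) ∘L J) := by
    intro k
    rw [ContinuousLinearMap.star_eq_adjoint, hB' k, ContinuousLinearMap.adjoint_comp,
      ContinuousLinearMap.adjoint_comp, hq1, hJ, Submodule.adjoint_subtypeL,
      Submodule.adjoint_orthogonalProjectionOnto, ContinuousLinearMap.star_eq_adjoint]
    rfl
  have hstarC : ∀ k, star (C k) = q2 ∘L (star (A k) ∘L J2) := by
    intro k
    rw [ContinuousLinearMap.star_eq_adjoint, hC' k, ContinuousLinearMap.adjoint_comp,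
      ContinuousLinearMap.adjoint_comp, hq2, hJ2, Submodule.adjoint_subtypeL,
      Submodule.adjoint_orthogonalProjectionOnto, ContinuousLinearMap.star_eq_adjoint]
    rfl
  -- sandwich homomorphisms
  set φ : (↥M →L[ℂ] ↥M) →+ (H →L[ℂ] H) :=
    AddMonoidHom.mk' (fun X => J ∘L X ∘L q1) (fun X Y => by
      ext x
      simp [ContinuousLinearMap.comp_apply, ContinuousLinearMap.add_apply]) with hφdef
  set ψ : (↥Mᗮ →L[ℂ] ↥Mᗮ) →+ (H →L[ℂ] H) :=
    AddMonoidHom.mk' (fun X => J2 ∘L X ∘L q2) (fun X Y => by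
      ext x
      simp [ContinuousLinearMap.comp_apply, ContinuousLinearMap.add_apply]) with hψdef
  have hφapp : ∀ X : ↥M →L[ℂ] ↥M, φ X = J ∘L X ∘L q1 := fun X => rfl
  have hψapp : ∀ X : ↥Mᗮ →L[ℂ] ↥Mᗮ, ψ X = J2 ∘L X ∘L q2 := fun X => rfl
  -- sandwich of B k and its star
  have hsandB : ∀ k, φ (B k * star (B k)) = (P * A k * P) * (P * star (A k) * P) := by
    intro k
    rw [hφapp]
    ext x
    rw [hstarB k, hB' k]
    simp only [ContinuousLinearMap.comp_apply, ContinuousLinearMap.mul_apply]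
    have hPapp : ∀ y : H, P y = J (q1 y) := fun y => rfl
    simp only [hPapp, hq1J]
  have hsandC : ∀ k, ψ (C k * star (C k)) = (Q * A k * Q) * (Q * star (A k) * Q) := by
    intro k
    rw [hψapp]
    ext x
    rw [hstarC k, hC' k]
    simp only [ContinuousLinearMap.comp_apply, ContinuousLinearMap.mul_apply]
    have hQapp : ∀ y : H, Q y = J2 (q2 y) := fun y => rfl
    simp only [hQapp, hq2J]
  have hφone : φ (1 : ↥M →L[ℂ] ↥M) = P := by
    rw [hφapp]
    ext x
    rfl
  have hψone : ψ (1 : ↥Mᗮ →L[ℂ] ↥Mᗮ) = Q := by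
    rw [hψapp]
    ext x
    rfl
  -- the two key identities
  have keyB : φ ((1 : ↥M →L[ℂ] ↥M) - ∑ k, B k * star (B k))
      = P * E * P + ∑ k, D k * star (D k) := by
    rw [map_sub, map_sum, hφone]
    have h1 : ∀ k, φ (B k * star (B k))
        = P * (A k * star (A k)) * P - D k * star (D k) := by
      intro k
      rw [hsandB k, hDdef]
      exact defect_block hPP hPstar (hPA k)
    rw [Finset.sum_congr rfl (fun k _ => h1 k)]
    rw [Finset.sum_sub_distrib]
    have h2 : P * E * P = P - ∑ k, P * (A k * star (A k)) * P := by
      rw [hEdef, mul_sub, sub_mul, mul_one, hPP, Finset.mul_sum, Finset.sum_mul]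
    rw [h2]
    abel
  have keyC : ψ ((1 : ↥Mᗮ →L[ℂ] ↥Mᗮ) - ∑ k, C k * star (C k)) = Q * E * Q := by
    rw [map_sub, map_sum, hψone]
    have h1 : ∀ k, ψ (C k * star (C k)) = Q * (A k * star (A k)) * Q := by
      intro k
      rw [hsandC k, hQ1P]
      exact defect_blockC hPstar (hPA k)
    rw [Finset.sum_congr rfl (fun k _ => h1 k)]
    have hQQ : Q * Q = Q := by
      have e : Q * Q - Q = P * P - P := by rw [hQ1P]; noncomm_ring
      have e2 : Q * Q - Q = 0 := by rw [e, hPP, sub_self]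
      exact sub_eq_zero.mp e2
    have h2 : Q * E * Q = Q - ∑ k, Q * (A k * star (A k)) * Q := by
      rw [hEdef, mul_sub, sub_mul, mul_one, hQQ, Finset.mul_sum, Finset.sum_mul]
    rw [h2]
  -- inverse sandwiches
  have hinvB : (1 : ↥M →L[ℂ] ↥M) - ∑ k, B k * star (B k)
      = q1 ∘L ((φ ((1 : ↥M →L[ℂ] ↥M) - ∑ k, B k * star (B k))) ∘L J) := by
    rw [hφapp]
    ext x
    simp only [ContinuousLinearMap.comp_apply]
    rw [hq1J, hq1J]
  have hinvC : (1 : ↥Mᗮ →L[ℂ] ↥Mᗮ) - ∑ k, C k * star (C k)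
      = q2 ∘L ((ψ ((1 : ↥Mᗮ →L[ℂ] ↥Mᗮ) - ∑ k, C k * star (C k))) ∘L J2) := by
    rw [hψapp]
    ext x
    simp only [ContinuousLinearMap.comp_apply]
    rw [hq2J, hq2J]
  -- positivity facts
  have hadjP : ContinuousLinearMap.adjoint P = P := by
    rw [← ContinuousLinearMap.star_eq_adjoint]; exact hPstar
  have hPEP_pos : (P * E * P).IsPositive := by
    have h1 := hcontr.conj_adjoint P
    rw [hadjP] at h1
    have h2 : P ∘L E ∘L P = P * E * P := by rw [mul_assoc]; rfl
    rwa [h2] at h1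
  have hDD_pos : ∀ k, (D k * star (D k)).IsPositive := by
    intro k
    have h1 := (ContinuousLinearMap.isPositive_one (E := H)).conj_adjoint (D k)
    have h2 : D k ∘L (1 : H →L[ℂ] H) ∘L ContinuousLinearMap.adjoint (D k)
        = D k * star (D k) := by
      rw [ContinuousLinearMap.star_eq_adjoint]
      ext x; rfl
    rwa [h2] at h1
  have hsumDD_pos : (∑ k, D k * star (D k)).IsPositive :=
    Finset.sum_induction _ _ (fun a b ha hb => ha.add hb)
      ContinuousLinearMap.isPositive_zero (fun k _ => hDD_pos k)
  have hEpos : E.IsPositive := hcontr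
  have hQEQ_pos : (Q * E * Q).IsPositive := by
    have hadjQ : ContinuousLinearMap.adjoint Q = Q := by
      rw [← ContinuousLinearMap.star_eq_adjoint, hQ1P]
      rw [star_sub, hPstar]
      simp
    have h1 := hEpos.conj_adjoint Q
    rw [hadjQ] at h1
    have h2 : Q ∘L E ∘L Q = Q * E * Q := by rw [mul_assoc]; rfl
    rwa [h2] at h1
  constructor
  · rintro ⟨hΔB, hΔC⟩
    -- sandwich memberships
    have hX : MemSchattenE p (φ ((1 : ↥M →L[ℂ] ↥M) - ∑ k, B k * star (B k))) := by
      rw [hφapp]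
      exact (hΔB.comp_right hp q1).comp_left hp J
    have hY : MemSchattenE p (ψ ((1 : ↥Mᗮ →L[ℂ] ↥Mᗮ) - ∑ k, C k * star (C k))) := by
      rw [hψapp]
      exact (hΔC.comp_right hp q2).comp_left hp J2
    rw [keyB] at hX
    rw [keyC] at hY
    -- P E P ∈ S_p
    have hPEP : MemSchattenE p (P * E * P) := by
      refine MemSchattenE.dominated hp hPEP_pos ?_ hX
      have : P * E * P + ∑ k, D k * star (D k) - P * E * P = ∑ k, D k * star (D k) := by abel
      rw [this]
      exact hsumDD_pos
    -- each D k D k* ∈ S_p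
    have hDDk : ∀ k, MemSchattenE p (D k * star (D k)) := by
      intro k
      refine MemSchattenE.dominated hp (hDD_pos k) ?_ hX
      have hsplit : ∑ j, D j * star (D j)
          = D k * star (D k) + ∑ j ∈ Finset.univ.erase k, D j * star (D j) :=
        (Finset.add_sum_erase _ _ (Finset.mem_univ k)).symm
      have : P * E * P + ∑ j, D j * star (D j) - D k * star (D k)
          = P * E * P + ∑ j ∈ Finset.univ.erase k, D j * star (D j) := by
        rw [hsplit]; abel
      rw [this]
      exact hPEP_pos.add (Finset.sum_induction _ _ (fun a b ha hb => ha.add hb)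
        ContinuousLinearMap.isPositive_zero (fun j _ => hDD_pos j))
    -- conclusion on commutators
    have hDk : ∀ k, MemSchattenE (2 * p) (D k) := by
      intro k
      refine (memSchattenE_mul_star_iff hp (D k)).mpr ?_
      have : D k ∘L ContinuousLinearMap.adjoint (D k) = D k * star (D k) := by
        rw [ContinuousLinearMap.star_eq_adjoint]; rfl
      rw [this]
      exact hDDk k
    -- E ∈ S_p
    have hE : MemSchattenE p E := by
      have hZ : MemSchattenE p ((P * E * P + Q * E * Q) + (P * E * P + Q * E * Q)) :=
        (hPEP.add hp hY).add hp (hPEP.add hp hY)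
      refine MemSchattenE.dominated hp hEpos ?_ hZ
      have hiden : ((P * E * P + Q * E * Q) + (P * E * P + Q * E * Q)) - E
          = (P - Q) * E * (P - Q) := by
        rw [hQ1P]
        exact sandwich_dom P E
      rw [hiden]
      have hadjPQ : ContinuousLinearMap.adjoint (P - Q) = P - Q := by
        rw [← ContinuousLinearMap.star_eq_adjoint, star_sub, hPstar, hQ1P, star_sub, hPstar]
        simp
      have h1 := hEpos.conj_adjoint (P - Q)
      rw [hadjPQ] at h1
      have h2 : (P - Q) ∘L E ∘L (P - Q) = (P - Q) * E * (P - Q) := by rw [mul_assoc]; rfl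
      rwa [h2] at h1
    refine ⟨?_, ?_⟩
    · exact hE
    · intro k
      rw [hMP]
      have := hDk k
      rw [hDdef] at this
      exact this
  · rintro ⟨hΔA, hDcomm⟩
    have hE : MemSchattenE p E := hΔA
    have hDk : ∀ k, MemSchattenE (2 * p) (D k) := by
      intro k
      have := hDcomm k
      rw [hMP] at this
      rw [hDdef]
      exact this
    have hDDk : ∀ k, MemSchattenE p (D k * star (D k)) := by
      intro k
      have h1 := (memSchattenE_mul_star_iff hp (D k)).mp (hDk k)
      have : D k ∘L ContinuousLinearMap.adjoint (D k) = D k * star (D k) := by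
        rw [ContinuousLinearMap.star_eq_adjoint]; rfl
      rwa [this] at h1
    have hPEP : MemSchattenE p (P * E * P) := by
      have h1 : MemSchattenE p (E ∘L P) := hE.comp_right hp P
      have h2 : MemSchattenE p (P ∘L (E ∘L P)) := h1.comp_left hp P
      have h3 : P * E * P = P ∘L (E ∘L P) := by rw [mul_assoc]; rfl
      rwa [h3]
    have hQEQ : MemSchattenE p (Q * E * Q) := by
      have h1 : MemSchattenE p (E ∘L Q) := hE.comp_right hp Q
      have h2 : MemSchattenE p (Q ∘L (E ∘L Q)) := h1.comp_left hp Q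
      have h3 : Q * E * Q = Q ∘L (E ∘L Q) := by rw [mul_assoc]; rfl
      rwa [h3]
    constructor
    · rw [hinvB, keyB]
      have hsum : MemSchattenE p (P * E * P + ∑ k, D k * star (D k)) :=
        hPEP.add hp (MemSchattenE.sum hp Finset.univ _ (fun k _ => hDDk k))
      exact (hsum.comp_right hp J).comp_left hp q1
    · rw [hinvC, keyC]
      exact (hQEQ.comp_right hp J2).comp_left hp q2


end Arveson
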